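/- Let p be an odd prime. In the vector space V = (GF(p))^3, the subspaces A = span{(1,0,0)}, B = span{(0,1,0)}, C = span{(0,0,1)}, W = span{(1,1,0)}, X = span{(1,0,1)}, Y = span{(0,1,1)}, Z = span{(1,1,1)} violate the inequality 2H(A) + 3H(B) + 2H(C) ≤ H(W) + H(X) + H(Y) + 3H(Z) + 2H(A|Y,Z) + 3H(B|X,Z) + H(C|W,Z) + 2H(W|A,B) + 4H(X|A,C) + 3H(Y|B,C) + 6H(Z|A,B,C) + H(C|W,X,Y) + 7(H(A) + H(B) + H(C) − H(A,B,C)); that is, with these subspaces the left-hand side is strictly greater than the right-hand side. -/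

import Mathlib

open Matrix

/-- `Hdim F S = dim S`, as an integer. -/
noncomputable def Hdim (F : Type*) {V : Type*} [Field F] [AddCommGroup V] [Module F V]
    (S : Submodule F V) : ℤ := Module.finrank F ↥S

/-- Conditional quantity `H(S | T) = dim (S + T) - dim T`, as an integer. -/
noncomputable def Hcond (F : Type*) {V : Type*} [Field F] [AddCommGroup V] [Module F V]
    (S T : Submodule F V) : ℤ := Hdim F (S ⊔ T) - Hdim F T

/-- Over `GF(p)^3` for an odd prime `p`, the one-dimensional non-Fano-configuration
subspaces violate the even-characteristic linear rank inequality of the non-Fano network. -/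
theorem nonfano_linear_rank_inequality_fails_odd_char
    (p : ℕ) (hp : p.Prime) (hodd : Odd p) :
    letI F := ZMod p
    haveI : Fact p.Prime := ⟨hp⟩
    ∀ (A B C W X Y Z : Submodule F (Fin 3 → F)),
      A = Submodule.span F {![1,0,0]} →
      B = Submodule.span F {![0,1,0]} →
      C = Submodule.span F {![0,0,1]} →
      W = Submodule.span F {![1,1,0]} →
      X = Submodule.span F {![1,0,1]} →
      Y = Submodule.span F {![0,1,1]} →
      Z = Submodule.span F {![1,1,1]} →
      2 * Hdim F A + 3 * Hdim F B + 2 * Hdim F C >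
        Hdim F W + Hdim F X + Hdim F Y + 3 * Hdim F Z
        + 2 * Hcond F A (Y ⊔ Z) + 3 * Hcond F B (X ⊔ Z) + Hcond F C (W ⊔ Z)
        + 2 * Hcond F W (A ⊔ B) + 4 * Hcond F X (A ⊔ C) + 3 * Hcond F Y (B ⊔ C)
        + 6 * Hcond F Z (A ⊔ B ⊔ C) + Hcond F C (W ⊔ X ⊔ Y)
        + 7 * (Hdim F A + Hdim F B + Hdim F C - Hdim F (A ⊔ B ⊔ C)) := by
  haveI : Fact p.Prime := ⟨hp⟩
  set F := ZMod p with hF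
  intro A B C W X Y Z hA hB hC hW hX hY hZ
  have h2 : (2 : F) ≠ 0 := by
    have hne : p ≠ 2 := by rintro rfl; exact (Nat.not_odd_iff_even.mpr ⟨1, rfl⟩) hodd
    have : ((2 : ℕ) : ZMod p) ≠ 0 := by
      rw [Ne, ZMod.natCast_eq_zero_iff]
      exact fun h => hne ((Nat.prime_dvd_prime_iff_eq hp Nat.prime_two).mp h)
    simpa using this
  -- nonzero vectors
  have hnz : ∀ v : Fin 3 → F, ∀ i, v i ≠ 0 → v ≠ 0 := by
    intro v i hvi h; exact hvi (by rw [h]; rfl)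
  have h1 : (1 : F) ≠ 0 := one_ne_zero
  -- dims of singleton spans
  have hd : ∀ v : Fin 3 → F, v ≠ 0 → Hdim F (Submodule.span F {v}) = 1 := by
    intro v hv; simp [Hdim, finrank_span_singleton hv]
  have dA : Hdim F A = 1 := by rw [hA]; exact hd _ (hnz _ 0 (by norm_num))
  have dB : Hdim F B = 1 := by rw [hB]; exact hd _ (hnz _ 1 (by norm_num))
  have dC : Hdim F C = 1 := by rw [hC]; exact hd _ (hnz _ 2 (by exact h1))
  have dW : Hdim F W = 1 := by rw [hW]; exact hd _ (hnz _ 0 (by norm_num))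
  have dX : Hdim F X = 1 := by rw [hX]; exact hd _ (hnz _ 0 (by norm_num))
  have dY : Hdim F Y = 1 := by rw [hY]; exact hd _ (hnz _ 1 (by norm_num))
  have dZ : Hdim F Z = 1 := by rw [hZ]; exact hd _ (hnz _ 0 (by norm_num))
  -- A ⊔ B ⊔ C = ⊤
  have habc : A ⊔ B ⊔ C = ⊤ := by
    rw [hA, hB, hC, eq_top_iff]
    rintro v -
    have hv : v = v 0 • ![1,0,0] + v 1 • ![0,1,0] + v 2 • ![0,0,1] := by
      funext i; fin_cases i <;> simp
    rw [hv]
    exact add_mem (add_mem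
      (Submodule.mem_sup_left (Submodule.mem_sup_left
        (Submodule.smul_mem _ _ (Submodule.mem_span_singleton_self _))))
      (Submodule.mem_sup_left (Submodule.mem_sup_right
        (Submodule.smul_mem _ _ (Submodule.mem_span_singleton_self _)))))
      (Submodule.mem_sup_right (Submodule.smul_mem _ _ (Submodule.mem_span_singleton_self _)))
  have dTop : Hdim F (A ⊔ B ⊔ C) = 3 := by
    rw [habc]; simp [Hdim]; exact_mod_cast Module.finrank_fin_fun (ZMod p) (n := 3)
  -- conditional terms vanish
  have hzero : ∀ S T : Submodule F (Fin 3 → F), S ≤ T → Hcond F S T = 0 := by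
    intro S T h; simp [Hcond, sup_eq_right.mpr h]
  have span_le_sup : ∀ (u v w : Fin 3 → F) (a b : F), a • v + b • w = u →
      Submodule.span F {u} ≤ Submodule.span F {v} ⊔ Submodule.span F {w} := by
    intro u v w a b h
    rw [Submodule.span_le, Set.singleton_subset_iff]
    exact Submodule.mem_sup.mpr ⟨a • v, Submodule.smul_mem _ _ (Submodule.mem_span_singleton_self _),
      b • w, Submodule.smul_mem _ _ (Submodule.mem_span_singleton_self _), h⟩
  have cAYZ : Hcond F A (Y ⊔ Z) = 0 := by
    refine hzero _ _ ?_
    rw [hA, hY, hZ]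
    exact span_le_sup _ _ _ (-1) 1 (by funext i; fin_cases i <;> simp)
  have cBXZ : Hcond F B (X ⊔ Z) = 0 := by
    refine hzero _ _ ?_
    rw [hB, hX, hZ]
    exact span_le_sup _ _ _ (-1) 1 (by funext i; fin_cases i <;> simp)
  have cCWZ : Hcond F C (W ⊔ Z) = 0 := by
    refine hzero _ _ ?_
    rw [hC, hW, hZ]
    exact span_le_sup _ _ _ (-1) 1 (by funext i; fin_cases i <;> simp)
  have cWAB : Hcond F W (A ⊔ B) = 0 := by
    refine hzero _ _ ?_
    rw [hW, hA, hB]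
    exact span_le_sup _ _ _ 1 1 (by funext i; fin_cases i <;> simp)
  have cXAC : Hcond F X (A ⊔ C) = 0 := by
    refine hzero _ _ ?_
    rw [hX, hA, hC]
    exact span_le_sup _ _ _ 1 1 (by funext i; fin_cases i <;> simp)
  have cYBC : Hcond F Y (B ⊔ C) = 0 := by
    refine hzero _ _ ?_
    rw [hY, hB, hC]
    exact span_le_sup _ _ _ 1 1 (by funext i; fin_cases i <;> simp)
  have cZABC : Hcond F Z (A ⊔ B ⊔ C) = 0 := hzero _ _ (habc ▸ le_top)
  have cCWXY : Hcond F C (W ⊔ X ⊔ Y) = 0 := by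
    refine hzero _ _ ?_
    rw [hC, hW, hX, hY, Submodule.span_le, Set.singleton_subset_iff]
    refine Submodule.mem_sup.mpr ⟨(-(2:F)⁻¹) • ![1,1,0] + (2:F)⁻¹ • ![1,0,1],
      Submodule.mem_sup.mpr ⟨_, Submodule.smul_mem _ _ (Submodule.mem_span_singleton_self _),
        _, Submodule.smul_mem _ _ (Submodule.mem_span_singleton_self _), rfl⟩,
      (2:F)⁻¹ • ![0,1,1], Submodule.smul_mem _ _ (Submodule.mem_span_singleton_self _), ?_⟩
    funext i
    fin_cases i <;> simp <;> field_simp <;> ring <;> exact inv_mul_cancel₀ h2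
  rw [dA, dB, dC, dW, dX, dY, dZ, dTop, cAYZ, cBXZ, cCWZ, cWAB, cXAC, cYBC, cZABC, cCWXY]
  norm_num
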